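/- Let f₀ : ℝⁿ → ℝⁿ be Lipschitz continuous with Lipschitz constant at most M and satisfy f₀(xᵢ) = yᵢ for every i = 1,…,N, and let (v, w) be feasible for the outer LP, i.e.: ∂v/∂t(t,x) + y·∇ₓv(t,x) ≤ 0 for all t ∈ [0,T], x ∈ X, y ∈ F(x); w(x) ≥ v(0,x) + 1 on X; v(T,x) ≥ 0 on X_T; w(x) ≥ 0 on X. Then the true region of attraction X₀(f₀) of the unknown system ẋ = f₀(x) satisfies X₀(f₀) ⊆ {x ∈ X : w(x) ≥ 1}. -/

import Mathlib

/-- The true region of attraction `X₀(f₀)` of the system `ẋ = f₀(x)`. -/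
def trueROA {n : ℕ} (T : ℝ) (f₀ : EuclideanSpace ℝ (Fin n) → EuclideanSpace ℝ (Fin n))
    (X XT : Set (EuclideanSpace ℝ (Fin n))) : Set (EuclideanSpace ℝ (Fin n)) :=
  {x₀ ∈ X | ∃ traj : ℝ → EuclideanSpace ℝ (Fin n),
    traj 0 = x₀ ∧ traj T ∈ XT ∧
    (∀ t ∈ Set.Icc (0 : ℝ) T, traj t ∈ X) ∧
    (∀ t ∈ Set.Icc (0 : ℝ) T, HasDerivAt traj (f₀ (traj t)) t)}

/-- if `f₀` is an `M`-Lipschitz interpolant of the data and `(v,w)` is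
feasible for the outer LP, then `X₀(f₀) ⊆ {x ∈ X : w(x) ≥ 1}`. -/
theorem trueROA_outer_estimate (n N : ℕ) (hn : 0 < n) (hN : 0 < N)
    (M T : ℝ) (hM : 0 < M) (hT : 0 < T)
    (xd yd : Fin N → EuclideanSpace ℝ (Fin n))
    (X XT : Set (EuclideanSpace ℝ (Fin n)))
    (hX : IsCompact X) (hXT : IsCompact XT) (hsub : XT ⊆ X)
    (f₀ : EuclideanSpace ℝ (Fin n) → EuclideanSpace ℝ (Fin n))
    (hLip : ∀ a b : EuclideanSpace ℝ (Fin n), ‖f₀ a - f₀ b‖ ≤ M * ‖a - b‖)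
    (hdata : ∀ i : Fin N, f₀ (xd i) = yd i)
    (v : ℝ × EuclideanSpace ℝ (Fin n) → ℝ) (hv : ContDiff ℝ 1 v)
    (w : EuclideanSpace ℝ (Fin n) → ℝ) (hw : Continuous w)
    (hLie : ∀ t ∈ Set.Icc (0 : ℝ) T, ∀ x ∈ X, ∀ y : EuclideanSpace ℝ (Fin n),
      (∀ i : Fin N, ‖y - yd i‖ ≤ M * ‖x - xd i‖) →
      fderiv ℝ v (t, x) (1, y) ≤ 0)
    (hwv : ∀ x ∈ X, w x ≥ v (0, x) + 1)
    (hvT : ∀ x ∈ XT, v (T, x) ≥ 0)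
    (hw0 : ∀ x ∈ X, w x ≥ 0) :
    trueROA T f₀ X XT ⊆ {x ∈ X | w x ≥ 1} := by
  rintro x₀ ⟨hx₀X, traj, h0, hTmem, hXmem, hderiv⟩
  refine ⟨hx₀X, ?_⟩
  set g : ℝ → ℝ := fun t => v (t, traj t) with hg
  have hgderiv : ∀ t ∈ Set.Icc (0 : ℝ) T,
      HasDerivAt g (fderiv ℝ v (t, traj t) (1, f₀ (traj t))) t := by
    intro t ht
    have h1 : HasDerivAt (fun s : ℝ => ((s, traj s) : ℝ × EuclideanSpace ℝ (Fin n)))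
        (1, f₀ (traj t)) t := (hasDerivAt_id t).prodMk (hderiv t ht)
    have h2 : HasFDerivAt v (fderiv ℝ v (t, traj t)) (t, traj t) :=
      (hv.differentiable one_ne_zero (t, traj t)).hasFDerivAt
    exact h2.comp_hasDerivAt t h1
  have hcont : ContinuousOn g (Set.Icc 0 T) := by
    have : ContinuousOn traj (Set.Icc 0 T) := fun t ht =>
      ((hderiv t ht).continuousAt).continuousWithinAt
    exact hv.continuous.comp_continuousOn (continuousOn_id.prodMk this)
  have hanti : AntitoneOn g (Set.Icc 0 T) := by
    apply antitoneOn_of_deriv_nonpos (convex_Icc 0 T) hcont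
    · intro t ht
      rw [interior_Icc] at ht
      have ht' : t ∈ Set.Icc (0 : ℝ) T := ⟨le_of_lt ht.1, le_of_lt ht.2⟩
      exact ((hgderiv t ht').differentiableAt).differentiableWithinAt
    intro t ht
    rw [interior_Icc] at ht
    have ht' : t ∈ Set.Icc (0 : ℝ) T := ⟨le_of_lt ht.1, le_of_lt ht.2⟩
    rw [(hgderiv t ht').deriv]
    refine hLie t ht' (traj t) (hXmem t ht') (f₀ (traj t)) ?_
    intro i
    calc ‖f₀ (traj t) - yd i‖ = ‖f₀ (traj t) - f₀ (xd i)‖ := by rw [hdata i]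
    _ ≤ M * ‖traj t - xd i‖ := hLip _ _
  have hT0 : (0 : ℝ) ∈ Set.Icc (0 : ℝ) T := ⟨le_rfl, le_of_lt hT⟩
  have hTT : T ∈ Set.Icc (0 : ℝ) T := ⟨le_of_lt hT, le_rfl⟩
  have h1 : g T ≤ g 0 := hanti hT0 hTT (le_of_lt hT)
  have h2 : (0 : ℝ) ≤ g T := hvT (traj T) hTmem
  have h3 : w x₀ ≥ v (0, x₀) + 1 := hwv x₀ hx₀X
  have : v (0, x₀) = g 0 := by simp only [hg, h0]
  linarith
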